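/- If ⟨α_i : i ∈ I⟩ is a sequence of nonzero ordinals such that ⟨|α_i| : i ∈ I⟩ is a reversible sequence of cardinals, then the disjoint union poset ⋃_{i∈I} α_i is reversible. -/

import Mathlib

universe u

/-- A poset is reversible iff every bijective homomorphism (monotone bijection) of it to
itself is an automorphism (i.e. its inverse is also monotone). -/
def Reversible (P : Type*) [PartialOrder P] : Prop :=
  ∀ f : P → P, Function.Bijective f → Monotone f → ∀ x y : P, f x ≤ f y → x ≤ y

/-- A sequence of (nonzero) cardinals is reversible iff there is no non-injective
surjection f : I → I such that for all j, the (cardinal) sum of κ_i over f⁻¹[{j}]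
equals κ_j. -/
def RevSeqCard {I : Type u} (κ : I → Cardinal.{u}) : Prop :=
  ¬ ∃ f : I → I, Function.Surjective f ∧ ¬ Function.Injective f ∧
      ∀ j, (Cardinal.sum fun i : f ⁻¹' {j} => κ i) = κ j

/-- The subtype of a sigma type with fixed first coordinate is equivalent to the fiber. -/
def sigmaFstEquiv {I : Type u} (β : I → Type u) (j : I) :
    {q : Σ i, β i // q.1 = j} ≃ β j where
  toFun q := q.2 ▸ q.1.2
  invFun b := ⟨⟨j, b⟩, rfl⟩
  left_inv := by rintro ⟨⟨i, a⟩, h⟩; subst h; rfl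
  right_inv b := rfl

/-- Sigma over a set of indices is equivalent to the subtype of the full sigma type. -/
def sigmaSubsetEquiv {I : Type u} (β : I → Type u) (s : Set I) :
    (Σ i : s, β i.1) ≃ {q : Σ i, β i // q.1 ∈ s} where
  toFun p := ⟨⟨p.1.1, p.2⟩, p.1.2⟩
  invFun q := ⟨⟨q.1.1, q.2⟩, q.1.2⟩
  left_inv := by rintro ⟨⟨i, hi⟩, a⟩; rfl
  right_inv := by rintro ⟨⟨i, a⟩, hi⟩; rfl

/-- If ⟨α_i : i ∈ I⟩ is a sequence of nonzero ordinals such that the sequence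
of cardinalities ⟨|α_i| : i ∈ I⟩ is a reversible sequence of cardinals, then the disjoint
union poset ⋃_{i∈I} α_i is reversible. -/
theorem stmt14 {I : Type u} (α : I → Ordinal.{u}) (h0 : ∀ i, α i ≠ 0)
    (h : RevSeqCard fun i => (α i).card) :
    Reversible (Σ i, (α i).ToType) := by
  classical
  intro f hbij hmono x y hle
  have hne : ∀ i, Nonempty (α i).ToType := fun i =>
    Ordinal.toType_nonempty_iff_ne_zero.2 (h0 i)
  -- comparable elements have equal first components
  have hfst : ∀ u v : (Σ i, (α i).ToType), u ≤ v → u.1 = v.1 := by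
    intro u v huv
    exact (Sigma.le_def.1 huv).choose
  -- the induced map on indices
  set g : I → I := fun i => (f ⟨i, Classical.arbitrary _⟩).1 with hg_def
  have hg : ∀ i (a : (α i).ToType), (f ⟨i, a⟩).1 = g i := by
    intro i a
    rcases le_total a (Classical.arbitrary ((α i).ToType)) with h' | h'
    · exact hfst _ _ (hmono (Sigma.mk_le_mk_iff.2 h'))
    · exact (hfst _ _ (hmono (Sigma.mk_le_mk_iff.2 h'))).symm
  have hgsurj : Function.Surjective g := by
    intro j
    obtain ⟨⟨i, a⟩, hfa⟩ := hbij.2 ⟨j, Classical.arbitrary _⟩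
    exact ⟨i, by rw [← hg i a, hfa]⟩
  -- the cardinal sum condition
  have hsum : ∀ j, (Cardinal.sum fun i : g ⁻¹' {j} => (α i).card) = (α j).card := by
    intro j
    have e : (Σ i : g ⁻¹' {j}, (α i.1).ToType) ≃ (α j).ToType := by
      refine (sigmaSubsetEquiv (fun i => (α i).ToType) (g ⁻¹' {j})).trans
        (((Equiv.ofBijective f hbij).subtypeEquiv ?_).trans
          (sigmaFstEquiv (fun i => (α i).ToType) j))
      rintro ⟨i, a⟩
      simp [Equiv.ofBijective, hg i a]
    calc (Cardinal.sum fun i : g ⁻¹' {j} => (α i).card)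
        = Cardinal.sum fun i : g ⁻¹' {j} => Cardinal.mk (α i.1).ToType := by
          simp [Cardinal.mk_toType]
      _ = Cardinal.mk (Σ i : g ⁻¹' {j}, (α i.1).ToType) := (Cardinal.mk_sigma _).symm
      _ = Cardinal.mk (α j).ToType := Cardinal.mk_congr e
      _ = (α j).card := Cardinal.mk_toType _
  -- g is injective by reversibility of the cardinal sequence
  have hginj : Function.Injective g := by
    by_contra hni
    exact h ⟨g, hgsurj, hni, hsum⟩
  -- finish
  obtain ⟨i, a⟩ := x
  obtain ⟨i', b⟩ := y
  have hii : i = i' := hginj (by rw [← hg i a, ← hg i' b]; exact hfst _ _ hle)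
  subst hii
  rcases le_total a b with h' | h'
  · exact Sigma.mk_le_mk_iff.2 h'
  · have : f ⟨i, b⟩ ≤ f ⟨i, a⟩ := hmono (Sigma.mk_le_mk_iff.2 h')
    have heq : (⟨i, a⟩ : Σ i, (α i).ToType) = ⟨i, b⟩ := hbij.1 (le_antisymm hle this)
    exact le_of_eq heq
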